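/- For each integer ℓ ≥ 1, the function H(x) = ∑_{i=ℓ+1}^{2ℓ+1} C(2ℓ+1,i) x^i(1−x)^{2ℓ+1−i} satisfies: (a) H(1/2) = 1/2; (b) H'(1/2) = (2ℓ+1)C(2ℓ,ℓ)·4^{−ℓ} > 1; (c) H'(0) = 0; (d) H(x) < x for all x ∈ (0, 1/2). -/

import Mathlib

/-- The updating function `H` of best-of-`(2ℓ+1)`. -/
noncomputable def bestOfOddH (l : ℕ) (x : ℝ) : ℝ :=
  ∑ i ∈ Finset.Icc (l + 1) (2 * l + 1),
    ((2 * l + 1).choose i : ℝ) * x ^ i * (1 - x) ^ (2 * l + 1 - i)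

open Finset

lemma key_deriv (l : ℕ) (hl : 1 ≤ l) (x : ℝ) :
    HasDerivAt (bestOfOddH l)
      ((2 * l + 1 : ℝ) * ((2 * l).choose l : ℝ) * (x ^ l * (1 - x) ^ l)) x := by
  set a : ℕ → ℝ := fun j => (2 * l + 1 : ℝ) * ((2 * l).choose j : ℝ) * x ^ j * (1 - x) ^ (2 * l - j) with ha
  have key : ∀ i ∈ Icc (l + 1) (2 * l + 1),
      HasDerivAt (fun y : ℝ => ((2 * l + 1).choose i : ℝ) * y ^ i * (1 - y) ^ (2 * l + 1 - i))
        (a (i - 1) - a i) x := by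
    intro i hi
    simp only [mem_Icc] at hi
    have hi1 : 1 ≤ i := by omega
    have h1 : HasDerivAt (fun y : ℝ => y ^ i) (i * x ^ (i - 1)) x := hasDerivAt_pow i x
    have h0 : HasDerivAt (fun y : ℝ => 1 - y) (-1) x := by
      simpa using (hasDerivAt_id x).const_sub 1
    have h2 := h0.pow (2 * l + 1 - i)
    have h3 := (h1.const_mul ((2 * l + 1).choose i : ℝ)).mul h2
    have goal_eq :
        ((2 * l + 1).choose i : ℝ) * (i * x ^ (i - 1)) * (1 - x) ^ (2 * l + 1 - i) +
            ((2 * l + 1).choose i : ℝ) * x ^ i * ((2 * l + 1 - i : ℕ) * (1 - x) ^ (2 * l + 1 - i - 1) * (-1))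
        = a (i - 1) - a i := by
      have id1 : (2 * l + 1).choose i * i = (2 * l + 1) * (2 * l).choose (i - 1) := by
        obtain ⟨k, rfl⟩ : ∃ k, i = k + 1 := ⟨i - 1, by omega⟩
        simpa [mul_comm] using (Nat.add_one_mul_choose_eq (2 * l) k).symm
      have id2 : (2 * l + 1).choose i * (2 * l + 1 - i) = (2 * l + 1) * (2 * l).choose i := by
        rw [← Nat.choose_succ_right_eq, ← Nat.add_one_mul_choose_eq]
      have e1 : 2 * l - (i - 1) = 2 * l + 1 - i := by omega
      have e2 : 2 * l - i = 2 * l + 1 - i - 1 := by omega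
      have c1 : ((2 * l + 1).choose i : ℝ) * i = (2 * l + 1) * ((2 * l).choose (i - 1)) := by
        exact_mod_cast congrArg (Nat.cast : ℕ → ℝ) id1
      have c2 : ((2 * l + 1).choose i : ℝ) * ((2 * l + 1 - i : ℕ) : ℝ)
          = (2 * l + 1) * ((2 * l).choose i) := by
        exact_mod_cast congrArg (Nat.cast : ℕ → ℝ) id2
      rw [ha]
      simp only [e1, e2]
      push_cast at c1 c2 ⊢
      linear_combination (x ^ (i - 1) * (1 - x) ^ (2 * l + 1 - i)) * c1
        - (x ^ i * (1 - x) ^ (2 * l + 1 - i - 1)) * c2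
    exact goal_eq ▸ h3
  have hsum := HasDerivAt.fun_sum key
  have tele : (∑ i ∈ Icc (l + 1) (2 * l + 1), (a (i - 1) - a i))
      = (2 * l + 1 : ℝ) * ((2 * l).choose l : ℝ) * (x ^ l * (1 - x) ^ l) := by
    rw [← Finset.Ico_add_one_right_eq_Icc, Finset.sum_Ico_eq_sum_range]
    have : ∀ j ∈ range (2 * l + 1 + 1 - (l + 1)), (a (l + 1 + j - 1) - a (l + 1 + j))
        = (fun j => a (l + j)) j - (fun j => a (l + j)) (j + 1) := by
      intro j _
      have : l + 1 + j - 1 = l + j := by omega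
      rw [this]
      simp [Nat.add_assoc, Nat.add_comm 1 j]
    rw [Finset.sum_congr rfl this, Finset.sum_range_sub' (fun j => a (l + j))]
    have h2 : 2 * l + 1 + 1 - (l + 1) = l + 1 := by omega
    rw [h2]
    have hz : a (l + (l + 1)) = 0 := by
      have : (2 * l).choose (l + (l + 1)) = 0 := Nat.choose_eq_zero_of_lt (by omega)
      simp [ha, this]
    rw [hz, sub_zero]
    show a l = _
    have hll : 2 * l - l = l := by omega
    simp only [ha]
    rw [hll]
    ring
  rw [← tele]
  exact hsum


lemma sum_choose_upper (l : ℕ) : ∑ i ∈ Icc (l + 1) (2 * l + 1), (2 * l + 1).choose i = 4 ^ l := by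
  have h1 : ∑ i ∈ range (l + 1), (2 * l + 1).choose i = 4 ^ l := Nat.sum_range_choose_halfway l
  have h2 : ∑ i ∈ range (2 * l + 2), (2 * l + 1).choose i = 2 ^ (2 * l + 1) :=
    Nat.sum_range_choose (2 * l + 1)
  have h3 : (∑ i ∈ Ico 0 (l + 1), (2 * l + 1).choose i)
      + ∑ i ∈ Ico (l + 1) (2 * l + 2), (2 * l + 1).choose i
      = ∑ i ∈ Ico 0 (2 * l + 2), (2 * l + 1).choose i :=
    Finset.sum_Ico_consecutive _ (by omega) (by omega)
  simp only [← Finset.range_eq_Ico] at h3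
  have h5 : Icc (l + 1) (2 * l + 1) = Ico (l + 1) (2 * l + 2) := by
    ext i; simp only [mem_Icc, mem_Ico]; omega
  rw [h5]
  have h4 : (2:ℕ) ^ (2 * l + 1) = 2 * 4 ^ l := by
    rw [pow_succ, mul_comm, pow_mul]; norm_num
  omega

lemma bestOfOddH_zero (l : ℕ) : bestOfOddH l 0 = 0 := by
  unfold bestOfOddH
  refine Finset.sum_eq_zero fun i hi => ?_
  simp only [mem_Icc] at hi
  rw [zero_pow (by omega)]
  ring

lemma bestOfOddH_half (l : ℕ) : bestOfOddH l (1/2) = 1/2 := by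
  unfold bestOfOddH
  have h : ∀ i ∈ Icc (l + 1) (2 * l + 1),
      ((2 * l + 1).choose i : ℝ) * (1/2) ^ i * (1 - 1/2) ^ (2 * l + 1 - i)
      = ((2 * l + 1).choose i : ℝ) * (1/2) ^ (2 * l + 1) := by
    intro i hi
    simp only [mem_Icc] at hi
    rw [show (1:ℝ) - 1/2 = 1/2 by norm_num, mul_assoc, ← pow_add,
      show i + (2 * l + 1 - i) = 2 * l + 1 by omega]
  rw [Finset.sum_congr rfl h, ← Finset.sum_mul, ← Nat.cast_sum, sum_choose_upper]
  push_cast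
  have h4 : (4:ℝ) ^ l = 2 ^ (2 * l) := by
    rw [show (4:ℝ) = 2 ^ 2 by norm_num, ← pow_mul]
  have h5 : ((1:ℝ)/2) ^ (2 * l + 1) = 1 / (2 ^ (2 * l) * 2) := by
    rw [div_pow, one_pow, pow_succ]
  rw [h4, h5]
  have : (2:ℝ) ^ (2 * l) ≠ 0 := by positivity
  field_simp

lemma central_lt (l : ℕ) (hl : 1 ≤ l) : 4 ^ l < (2 * l + 1) * (2 * l).choose l := by
  rcases le_or_gt 4 l with h | h
  · calc 4 ^ l < l * Nat.centralBinom l := Nat.four_pow_lt_mul_centralBinom l h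
    _ ≤ (2 * l + 1) * (2 * l).choose l := by
        unfold Nat.centralBinom; exact Nat.mul_le_mul_right _ (by omega)
  · interval_cases l <;> decide

/-- Best-of-`(2ℓ+1)` is a quasi-majority functional voting:
(a) `H(1/2) = 1/2`; (b) `H'(1/2) = (2ℓ+1)C(2ℓ,ℓ)4^{−ℓ} > 1`; (c) `H'(0) = 0`;
(d) `H(x) < x` on `(0, 1/2)`. -/
theorem stmt_8 (l : ℕ) (hl : 1 ≤ l) :
    bestOfOddH l (1/2) = 1/2
    ∧ deriv (bestOfOddH l) (1/2) = (2 * l + 1 : ℝ) * ((2 * l).choose l : ℝ) / 4 ^ l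
    ∧ 1 < deriv (bestOfOddH l) (1/2)
    ∧ deriv (bestOfOddH l) 0 = 0
    ∧ ∀ x : ℝ, 0 < x → x < 1/2 → bestOfOddH l x < x := by
  have hd := key_deriv l hl
  have hderiv_half : deriv (bestOfOddH l) (1/2)
      = (2 * l + 1 : ℝ) * ((2 * l).choose l : ℝ) / 4 ^ l := by
    rw [(hd (1/2)).deriv, show ((1:ℝ)/2) ^ l * (1 - 1/2) ^ l = (4 ^ l : ℝ)⁻¹ by
      rw [show (1:ℝ) - 1/2 = 1/2 by norm_num, ← mul_pow,
        show (1:ℝ)/2 * (1/2) = (4:ℝ)⁻¹ by norm_num, inv_pow]]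
    rw [div_eq_mul_inv]
  have hpos : (0:ℝ) < 4 ^ l := by positivity
  refine ⟨bestOfOddH_half l, hderiv_half, ?_, ?_, ?_⟩
  · rw [hderiv_half, lt_div_iff₀ hpos, one_mul]
    exact_mod_cast central_lt l hl
  · rw [(hd 0).deriv, zero_pow (by omega)]
    ring
  · -- part (d)
    intro x hx0 hx2
    set c : ℝ := (2 * l + 1 : ℝ) * ((2 * l).choose l : ℝ) with hc
    have hch : (0:ℝ) < ((2 * l).choose l : ℝ) := by
      exact_mod_cast Nat.choose_pos (by omega : l ≤ 2 * l)
    have hcpos : 0 < c := by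
      rw [hc]; exact mul_pos (by positivity) hch
    set D : ℝ → ℝ := fun y => y - bestOfOddH l y with hD
    have hDd : ∀ y : ℝ, HasDerivAt D (1 - c * (y ^ l * (1 - y) ^ l)) y := fun y =>
      (hasDerivAt_id y).sub (hd y)
    have hderivD : ∀ y : ℝ, deriv D y = 1 - c * (y ^ l * (1 - y) ^ l) := fun y => (hDd y).deriv
    have hanti : StrictAntiOn (deriv D) (Set.Ioo (0:ℝ) (1/2)) := by
      intro a ha b hb hab
      rw [hderivD, hderivD]
      have key : a * (1 - a) < b * (1 - b) := by nlinarith [ha.1, ha.2, hb.1, hb.2]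
      have h1 : a ^ l * (1 - a) ^ l < b ^ l * (1 - b) ^ l := by
        rw [← mul_pow, ← mul_pow]
        exact pow_lt_pow_left₀ key (by nlinarith [ha.1, ha.2]) (by omega)
      nlinarith
    have hcont : ContinuousOn D (Set.Icc 0 (1/2)) :=
      (Continuous.continuousOn (by
        have : Differentiable ℝ D := fun y => (hDd y).differentiableAt
        exact this.continuous))
    have hconc : StrictConcaveOn ℝ (Set.Icc (0:ℝ) (1/2)) D := by
      refine StrictAntiOn.strictConcaveOn_of_deriv (convex_Icc _ _) hcont ?_
      rwa [interior_Icc]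
    have h0 : D 0 = 0 := by
      show (0:ℝ) - bestOfOddH l 0 = 0
      rw [bestOfOddH_zero]; ring
    have hhalf : D (1/2) = 0 := by
      show (1:ℝ)/2 - bestOfOddH l (1/2) = 0
      rw [bestOfOddH_half]; ring
    have hmem0 : (0:ℝ) ∈ Set.Icc (0:ℝ) (1/2) := Set.left_mem_Icc.2 (by norm_num)
    have hmemh : (1/2:ℝ) ∈ Set.Icc (0:ℝ) (1/2) := Set.right_mem_Icc.2 (by norm_num)
    have hkey := hconc.2 hmem0 hmemh (by norm_num)
      (show (0:ℝ) < 1 - 2 * x by linarith) (show (0:ℝ) < 2 * x by linarith) (by ring)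
    rw [h0, hhalf] at hkey
    have hx : (1 - 2 * x) • (0:ℝ) + (2 * x) • (1/2 : ℝ) = x := by
      simp only [smul_eq_mul]; ring
    rw [hx] at hkey
    simp only [smul_eq_mul, mul_zero, add_zero] at hkey
    have hDx : 0 < D x := hkey
    simp only [hD] at hDx
    linarith
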